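/- Let U, X, Y be finite sets with a distinguished element x₀ ∈ X. For each x ∈ X let P_{U|X}(·|x) be a pmf on U, let P̃ be a pmf on X with P̃(x₀) = 0, and let W assign to each x a pmf W(·|x) on Y with W(y|x₀) > 0 for all y. For μ ∈ ℝ define P^μ : U × Y → ℝ by P^μ(u,y) = (1−μ)·P_{U|X}(u|x₀)·W(y|x₀) + μ·∑_{x∈X} P_{U|X}(u|x)·P̃(x)·W(y|x), and set c(u,y) = ∑_{x∈X} P_{U|X}(u|x)·P̃(x)·W(y|x) − P_{U|X}(u|x₀)·W(y|x₀). Then for every μ₀ ∈ (0,1) such that P^{μ₀}(u,y) > 0 for all (u,y), the map μ ↦ I(P^μ) has a derivative at μ₀, equal to ∑_{(u,y)} c(u,y)·(Real.log(P^{μ₀}(u,y)) − Real.log(P_U^{μ₀}(u)) − Real.log(P_Y^{μ₀}(y))), where P_U^{μ₀}(u) = ∑_y P^{μ₀}(u,y) and P_Y^{μ₀}(y) = ∑_u P^{μ₀}(u,y). -/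

import Mathlib

open Real

/-- Mutual information of a joint function `P` on a product of finite alphabets. -/
noncomputable def mutualInfo {U Y : Type*} [Fintype U] [Fintype Y] (P : U → Y → ℝ) : ℝ :=
  ∑ u, ∑ y, P u y *
    (Real.log (P u y) - Real.log (∑ y', P u y') - Real.log (∑ u', P u' y))

lemma affine_mul_log (a c μ₀ : ℝ) (h : a + μ₀ * c ≠ 0) :
    HasDerivAt (fun μ => (a + μ * c) * Real.log (a + μ * c))
      (c * (Real.log (a + μ₀ * c) + 1)) μ₀ := by
  have h1 : HasDerivAt (fun μ : ℝ => a + μ * c) c μ₀ := by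
    simpa using ((hasDerivAt_id μ₀).mul_const c).const_add a
  have h2 := (Real.hasDerivAt_mul_log h).comp μ₀ h1
  simpa [mul_comm, Function.comp_def] using h2

lemma mi_split {U Y : Type*} [Fintype U] [Fintype Y] (P : U → Y → ℝ) :
    mutualInfo P
    = (∑ u, ∑ y, P u y * Real.log (P u y))
      - (∑ u, (∑ y, P u y) * Real.log (∑ y, P u y))
      - (∑ y, (∑ u, P u y) * Real.log (∑ u, P u y)) := by
  unfold mutualInfo
  simp only [mul_sub, Finset.sum_sub_distrib, ← Finset.sum_mul]
  congr 1
  rw [Finset.sum_comm]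
  simp [Finset.sum_mul]

theorem stmt_8 {U X Y : Type*} [Fintype U] [Fintype X] [Fintype Y]
    (x₀ : X)
    (PUX : X → U → ℝ)  -- `PUX x u` is the conditional pmf P_{U|X}(u|x)
    (hPUX0 : ∀ x u, 0 ≤ PUX x u) (hPUX1 : ∀ x, ∑ u, PUX x u = 1)
    (Pt : X → ℝ) (hPt0 : ∀ x, 0 ≤ Pt x) (hPt1 : ∑ x, Pt x = 1) (hPtx0 : Pt x₀ = 0)
    (W : X → Y → ℝ) (hW0 : ∀ x y, 0 ≤ W x y) (hW1 : ∀ x, ∑ y, W x y = 1)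
    (hWpos : ∀ y, 0 < W x₀ y)
    (P : ℝ → U → Y → ℝ)
    (hP : ∀ μ u y, P μ u y
      = (1 - μ) * PUX x₀ u * W x₀ y + μ * ∑ x, PUX x u * Pt x * W x y)
    (c : U → Y → ℝ)
    (hc : ∀ u y, c u y = (∑ x, PUX x u * Pt x * W x y) - PUX x₀ u * W x₀ y)
    (μ₀ : ℝ) (hμ₀ : μ₀ ∈ Set.Ioo (0 : ℝ) 1)
    (hpos : ∀ u y, 0 < P μ₀ u y) :
    HasDerivAt (fun μ => mutualInfo (P μ))
      (∑ u, ∑ y, c u y * (Real.log (P μ₀ u y) - Real.log (∑ y', P μ₀ u y')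
        - Real.log (∑ u', P μ₀ u' y))) μ₀ := by
  classical
  -- trivial cases: empty alphabets
  rcases isEmpty_or_nonempty U with hU | hU
  · have hz : (fun μ => mutualInfo (P μ)) = fun _ => (0:ℝ) := by
      funext μ; simp [mutualInfo]
    rw [hz]
    simpa using hasDerivAt_const μ₀ (0:ℝ)
  rcases isEmpty_or_nonempty Y with hY | hY
  · have hz : (fun μ => mutualInfo (P μ)) = fun _ => (0:ℝ) := by
      funext μ; simp [mutualInfo]
    rw [hz]
    simpa using hasDerivAt_const μ₀ (0:ℝ)
  set a : U → Y → ℝ := fun u y => PUX x₀ u * W x₀ y with ha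
  have key : ∀ μ u y, P μ u y = a u y + μ * c u y := by
    intro μ u y; rw [hP, hc]; ring
  -- marginals are affine too
  have keyU : ∀ μ u, (∑ y, P μ u y) = (∑ y, a u y) + μ * (∑ y, c u y) := by
    intro μ u
    simp [key, Finset.sum_add_distrib, Finset.mul_sum]
  have keyY : ∀ μ y, (∑ u, P μ u y) = (∑ u, a u y) + μ * (∑ u, c u y) := by
    intro μ y
    simp [key, Finset.sum_add_distrib, Finset.mul_sum]
  -- positivity at μ₀
  have hposU : ∀ u, 0 < ∑ y, P μ₀ u y := fun u =>
    Finset.sum_pos (fun y _ => hpos u y) Finset.univ_nonempty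
  have hposY : ∀ y, 0 < ∑ u, P μ₀ u y := fun y =>
    Finset.sum_pos (fun u _ => hpos u y) Finset.univ_nonempty
  -- total sum of c is zero
  have hcsum : ∑ u, ∑ y, c u y = 0 := by
    have hS : ∑ u, ∑ y, ∑ x, PUX x u * Pt x * W x y = 1 := by
      have h1 : ∀ u : U, (∑ y, ∑ x, PUX x u * Pt x * W x y)
          = ∑ x, PUX x u * Pt x := by
        intro u
        rw [Finset.sum_comm]
        simp [← Finset.mul_sum, hW1]
      simp only [h1]
      rw [Finset.sum_comm]
      simp [← Finset.sum_mul, hPUX1, hPt1]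
    have hA : ∑ u, ∑ y, PUX x₀ u * W x₀ y = 1 := by
      simp [← Finset.mul_sum, hW1, ← Finset.sum_mul, hPUX1]
    simp [hc, Finset.sum_sub_distrib, hS, hA]
  -- derivatives of the three pieces
  have hT1 : HasDerivAt (fun μ => ∑ u, ∑ y, P μ u y * Real.log (P μ u y))
      (∑ u, ∑ y, c u y * (Real.log (P μ₀ u y) + 1)) μ₀ := by
    refine HasDerivAt.fun_sum fun u _ => HasDerivAt.fun_sum fun y _ => ?_
    have := affine_mul_log (a u y) (c u y) μ₀ (by rw [← key]; exact (hpos u y).ne')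
    simp only [← key] at this
    convert this using 2 <;> simp [key]
  have hT2 : HasDerivAt (fun μ => ∑ u, (∑ y, P μ u y) * Real.log (∑ y, P μ u y))
      (∑ u, (∑ y, c u y) * (Real.log (∑ y, P μ₀ u y) + 1)) μ₀ := by
    refine HasDerivAt.fun_sum fun u _ => ?_
    have := affine_mul_log (∑ y, a u y) (∑ y, c u y) μ₀
      (by rw [← keyU]; exact (hposU u).ne')
    simp only [← keyU] at this
    convert this using 2 <;> simp [keyU]
  have hT3 : HasDerivAt (fun μ => ∑ y, (∑ u, P μ u y) * Real.log (∑ u, P μ u y))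
      (∑ y, (∑ u, c u y) * (Real.log (∑ u, P μ₀ u y) + 1)) μ₀ := by
    refine HasDerivAt.fun_sum fun y _ => ?_
    have := affine_mul_log (∑ u, a u y) (∑ u, c u y) μ₀
      (by rw [← keyY]; exact (hposY y).ne')
    simp only [← keyY] at this
    convert this using 2 <;> simp [keyY]
  have hD := (hT1.sub hT2).sub hT3
  have hfun : (fun μ => mutualInfo (P μ))
      = fun μ => (∑ u, ∑ y, P μ u y * Real.log (P μ u y))
        - (∑ u, (∑ y, P μ u y) * Real.log (∑ y, P μ u y))
        - (∑ y, (∑ u, P μ u y) * Real.log (∑ u, P μ u y)) := by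
    funext μ; exact mi_split (P μ)
  rw [hfun]
  refine hD.congr_deriv (Eq.symm ?_)
  -- algebraic identity for the derivative value
  have e2 : ∑ u, (∑ y, c u y) * (Real.log (∑ y, P μ₀ u y) + 1)
      = (∑ u, ∑ y, c u y * Real.log (∑ y', P μ₀ u y')) + ∑ u, ∑ y, c u y := by
    simp [Finset.sum_mul, mul_add, Finset.sum_add_distrib]
  have e3 : ∑ y, (∑ u, c u y) * (Real.log (∑ u, P μ₀ u y) + 1)
      = (∑ u, ∑ y, c u y * Real.log (∑ u', P μ₀ u' y)) + ∑ u, ∑ y, c u y := by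
    rw [Finset.sum_comm (f := fun u y => c u y * Real.log (∑ u', P μ₀ u' y)),
        Finset.sum_comm (f := fun u y => c u y)]
    simp [Finset.sum_mul, mul_add, Finset.sum_add_distrib]
  have e1 : ∑ u, ∑ y, c u y * (Real.log (P μ₀ u y) + 1)
      = (∑ u, ∑ y, c u y * Real.log (P μ₀ u y)) + ∑ u, ∑ y, c u y := by
    simp [mul_add, Finset.sum_add_distrib]
  rw [e1, e2, e3, hcsum]
  simp [mul_sub, Finset.sum_sub_distrib]
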